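/- Let m1, m2 be positive integers, let H1 be a complex polynomial of degree m1 all of whose roots lie in K̃1, let H2 be a complex polynomial of degree m2 all of whose roots lie in K̃2, and set H = H1·H2. Then H(−s) ≠ 0 for every s ∈ K̃, and sup_{s ∈ K̃1} |H(s)/H(−s)| = sup_{s ∈ K̃1} |H1(s)/H1(−s)|, and sup_{s ∈ K̃2} |H(s)/H(−s)| = sup_{s ∈ K̃2} |H2(s)/H2(−s)|. -/

import Mathlib

/-- The segment of the positive imaginary axis `{ i·u : u ∈ [√(−b1), √(−a1)] }`. -/
noncomputable def Kt1 (a1 b1 : ℝ) : Set ℂ :=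
  (fun u : ℝ => Complex.I * (u : ℂ)) '' Set.Icc (Real.sqrt (-b1)) (Real.sqrt (-a1))

/-- The segment of the positive real axis `[√(a2), √(b2)]`. -/
noncomputable def Kt2 (a2 b2 : ℝ) : Set ℂ :=
  (fun u : ℝ => (u : ℂ)) '' Set.Icc (Real.sqrt a2) (Real.sqrt b2)

lemma abs_eval_eq' (H : Polynomial ℂ) (z w : ℂ)
    (h : ∀ r ∈ H.roots, ‖z - r‖ = ‖w - r‖) :
    ‖H.eval z‖ = ‖H.eval w‖ := by
  by_cases h0 : H = 0
  · simp [h0]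
  have hf := (IsAlgClosed.splits H).eq_prod_roots
  have key : ∀ t : ℂ, ‖H.eval t‖
      = ‖H.leadingCoeff‖ * (H.roots.map (fun r => ‖t - r‖)).prod := by
    intro t
    conv_lhs => rw [hf]
    rw [Polynomial.eval_mul, norm_mul, Polynomial.eval_multiset_prod, Multiset.map_map]
    have hn : ∀ m : Multiset ℂ, ‖m.prod‖ = (m.map (fun x => ‖x‖)).prod :=
      fun m => map_multiset_prod (normHom : ℂ →*₀ ℝ) m
    rw [hn, Multiset.map_map]
    simp [Function.comp_def]
  rw [key z, key w]
  congr 1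
  exact congrArg Multiset.prod (Multiset.map_congr rfl (fun r hr => h r hr))

lemma mem_Kt1' {a1 b1 : ℝ} (hb1 : b1 < 0) {z : ℂ} (hz : z ∈ Kt1 a1 b1) :
    z.re = 0 ∧ 0 < z.im ∧ (starRingEnd ℂ) z = -z := by
  obtain ⟨u, hu, rfl⟩ := hz
  have hu0 : 0 < u := lt_of_lt_of_le (Real.sqrt_pos.2 (by linarith)) hu.1
  exact ⟨by simp, by simpa using hu0, by simp [Complex.ext_iff]⟩

lemma mem_Kt2' {a2 b2 : ℝ} (ha2 : 0 < a2) {z : ℂ} (hz : z ∈ Kt2 a2 b2) :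
    0 < z.re ∧ z.im = 0 ∧ (starRingEnd ℂ) z = z := by
  obtain ⟨u, hu, rfl⟩ := hz
  have hu0 : 0 < u := lt_of_lt_of_le (Real.sqrt_pos.2 ha2) hu.1
  exact ⟨by simpa using hu0, by simp, by simp [Complex.ext_iff]⟩

theorem stmt0 (a1 b1 a2 b2 : ℝ) (hab1 : a1 < b1) (hb1 : b1 < 0) (ha2 : 0 < a2)
    (hab2 : a2 < b2) (m1 m2 : ℕ) (hm1 : 0 < m1) (hm2 : 0 < m2) (H1 H2 : Polynomial ℂ)
    (hd1 : H1.degree = m1) (hd2 : H2.degree = m2)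
    (hr1 : ∀ z : ℂ, H1.IsRoot z → z ∈ Kt1 a1 b1)
    (hr2 : ∀ z : ℂ, H2.IsRoot z → z ∈ Kt2 a2 b2) :
    (∀ s ∈ Kt1 a1 b1 ∪ Kt2 a2 b2, (H1 * H2).eval (-s) ≠ 0) ∧
    sSup ((fun s : ℂ => ‖(H1 * H2).eval s / (H1 * H2).eval (-s)‖) '' Kt1 a1 b1) =
      sSup ((fun s : ℂ => ‖H1.eval s / H1.eval (-s)‖) '' Kt1 a1 b1) ∧
    sSup ((fun s : ℂ => ‖(H1 * H2).eval s / (H1 * H2).eval (-s)‖) '' Kt2 a2 b2) =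
      sSup ((fun s : ℂ => ‖H2.eval s / H2.eval (-s)‖) '' Kt2 a2 b2) := by
  have h10 : H1 ≠ 0 := fun h => by simp [h] at hd1
  have h20 : H2 ≠ 0 := fun h => by simp [h] at hd2
  -- nonvanishing of H1 and H2 at -s
  have hnv1 : ∀ s ∈ Kt1 a1 b1 ∪ Kt2 a2 b2, H1.eval (-s) ≠ 0 := by
    intro s hs h
    obtain ⟨hre, him, _⟩ := mem_Kt1' hb1 (hr1 _ h)
    rcases hs with hs | hs
    · obtain ⟨_, him', _⟩ := mem_Kt1' hb1 hs
      simp only [Complex.neg_im] at him; linarith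
    · obtain ⟨_, him', _⟩ := mem_Kt2' ha2 hs
      simp only [Complex.neg_im] at him; rw [him'] at him; linarith
  have hnv2 : ∀ s ∈ Kt1 a1 b1 ∪ Kt2 a2 b2, H2.eval (-s) ≠ 0 := by
    intro s hs h
    obtain ⟨hre, him, _⟩ := mem_Kt2' ha2 (hr2 _ h)
    rcases hs with hs | hs
    · obtain ⟨hre', _, _⟩ := mem_Kt1' hb1 hs
      simp only [Complex.neg_re] at hre; rw [hre'] at hre; linarith
    · obtain ⟨hre', _, _⟩ := mem_Kt2' ha2 hs
      simp only [Complex.neg_re] at hre; linarith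
  refine ⟨fun s hs => by
      rw [Polynomial.eval_mul]
      exact mul_ne_zero (hnv1 s hs) (hnv2 s hs), ?_, ?_⟩
  · -- on Kt1: |H2 s| = |H2 (-s)|
    have himg : ∀ s ∈ Kt1 a1 b1,
        ‖(H1 * H2).eval s / (H1 * H2).eval (-s)‖
          = ‖H1.eval s / H1.eval (-s)‖ := by
      intro s hs
      obtain ⟨_, _, hconj⟩ := mem_Kt1' hb1 hs
      have habs2 : ‖H2.eval s‖ = ‖H2.eval (-s)‖ := by
        apply abs_eval_eq'
        intro r hr
        obtain ⟨_, _, hrc⟩ := mem_Kt2' ha2 (hr2 r (Polynomial.isRoot_of_mem_roots hr))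
        calc ‖s - r‖ = ‖(starRingEnd ℂ) (s - r)‖ :=
              (Complex.norm_conj _).symm
          _ = ‖-s - r‖ := by rw [map_sub, hconj, hrc]
      have hne : ‖H2.eval (-s)‖ ≠ 0 :=
        norm_ne_zero_iff.2 (hnv2 s (Or.inl hs))
      rw [Polynomial.eval_mul, Polynomial.eval_mul, norm_div, norm_div, norm_mul, norm_mul,
        habs2, mul_div_mul_right _ _ hne]
    rw [Set.image_congr himg]
  · have himg : ∀ s ∈ Kt2 a2 b2,
        ‖(H1 * H2).eval s / (H1 * H2).eval (-s)‖
          = ‖H2.eval s / H2.eval (-s)‖ := by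
      intro s hs
      obtain ⟨_, _, hconj⟩ := mem_Kt2' ha2 hs
      have habs1 : ‖H1.eval s‖ = ‖H1.eval (-s)‖ := by
        apply abs_eval_eq'
        intro r hr
        obtain ⟨_, _, hrc⟩ := mem_Kt1' hb1 (hr1 r (Polynomial.isRoot_of_mem_roots hr))
        calc ‖s - r‖ = ‖(starRingEnd ℂ) (s - r)‖ :=
              (Complex.norm_conj _).symm
          _ = ‖-(-s - r)‖ := by rw [map_sub, hconj, hrc]; ring_nf
          _ = ‖-s - r‖ := norm_neg _
      have hne : ‖H1.eval (-s)‖ ≠ 0 :=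
        norm_ne_zero_iff.2 (hnv1 s (Or.inr hs))
      rw [Polynomial.eval_mul, Polynomial.eval_mul, norm_div, norm_div, norm_mul, norm_mul,
        habs1, mul_div_mul_left _ _ hne]
    rw [Set.image_congr himg]
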